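/- Let θ₀, s, G > 0, let X̃ ~ Exp(θ₀) and T̃ ~ Uniform[0,G] be independent, and let α(·) be the selection-probability function with derivative α'. Then the score has mean zero at the true parameter: E[ 1_{T̃ ≤ X̃ ≤ T̃ + s} · ( X̃ − 1/θ₀ + α'(θ₀)/α(θ₀) ) ] = 0. -/

import Mathlib

open MeasureTheory ProbabilityTheory Real Set Filter
open scoped ENNReal NNReal

/-- The uniform probability measure on the interval `[0, G]`. -/
noncomputable def uniformMeasure (G : ℝ) : Measure ℝ :=
  (ENNReal.ofReal G)⁻¹ • (volume.restrict (Set.Icc 0 G))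

/-- The selection probability function `α(θ) = (1 − e^{−θs})(1 − e^{−Gθ})/(Gθ)`. -/
noncomputable def alphaFun (s G θ : ℝ) : ℝ :=
  (1 - exp (-(θ * s))) * (1 - exp (-(G * θ))) / (G * θ)

lemma hasDerivAt_piece (θ a x : ℝ) (hθ : θ ≠ 0) :
    HasDerivAt (fun t => -((t + a)/θ + 1/θ^2) * exp (-(θ*t))) ((x + a) * exp (-(θ*x))) x := by
  have h1 : HasDerivAt (fun t : ℝ => -((t + a)/θ + 1/θ^2)) (-(1/θ)) x := by
    have := (((hasDerivAt_id x).add_const a).div_const θ).add_const (1/θ^2)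
    exact this.neg
  have h2 : HasDerivAt (fun t : ℝ => exp (-(θ*t))) (exp (-(θ*x)) * -(θ*1)) x :=
    (((hasDerivAt_id x).const_mul θ).neg).exp
  have h := h1.mul h2
  refine h.congr_deriv ?_
  field_simp
  ring

lemma hasDerivAt_inner (θ a x : ℝ) :
    HasDerivAt (fun y => -(y + a) * exp (-(θ*y)))
      (θ * exp (-(θ*x)) * (x + a) - exp (-(θ*x))) x := by
  have h1 : HasDerivAt (fun y : ℝ => -(y + a)) (-1) x := by
    exact ((hasDerivAt_id x).add_const a).neg
  have h2 : HasDerivAt (fun y : ℝ => exp (-(θ*y))) (exp (-(θ*x)) * -(θ*1)) x :=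
    (((hasDerivAt_id x).const_mul θ).neg).exp
  have h := h1.mul h2
  refine h.congr_deriv ?_
  ring

lemma integral_exp_affine (θ c l u : ℝ) (hθ : θ ≠ 0) :
    ∫ x in l..u, θ * exp (-(θ*x)) * (x + c) =
      (l + (c + 1/θ)) * exp (-(θ*l)) - (u + (c + 1/θ)) * exp (-(θ*u)) := by
  rw [intervalIntegral.integral_eq_sub_of_hasDerivAt
    (f := fun y => -(y + (c + 1/θ)) * exp (-(θ*y))) (f' := fun x => θ * exp (-(θ*x)) * (x + c)) (fun x _ => ?_)
    ((Continuous.mul (by fun_prop) (by fun_prop)).intervalIntegrable _ _)]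
  · ring
  · have h := hasDerivAt_inner θ (c + 1/θ) x
    refine h.congr_deriv ?_
    field_simp
    ring

lemma integral_outer (θ a s G : ℝ) (hθ : θ ≠ 0) :
    ∫ t in (0:ℝ)..G, ((t + a) * exp (-(θ*t)) - ((t+s) + a) * exp (-(θ*(t+s)))) =
      ((-((G + a)/θ + 1/θ^2) * exp (-(θ*G)) - exp (-(θ*s)) * (-((G + (s+a))/θ + 1/θ^2) * exp (-(θ*G))))
      - (-((0 + a)/θ + 1/θ^2) * exp (-(θ*0)) - exp (-(θ*s)) * (-((0 + (s+a))/θ + 1/θ^2) * exp (-(θ*0))))) := by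
  apply intervalIntegral.integral_eq_sub_of_hasDerivAt
  · intro x _
    have h1 := hasDerivAt_piece θ a x hθ
    have h2 := (hasDerivAt_piece θ (s+a) x hθ).const_mul (exp (-(θ*s)))
    have h := h1.sub h2
    refine h.congr_deriv ?_
    rw [show -(θ*(x+s)) = -(θ*x) + -(θ*s) by ring, exp_add]
    ring
  · apply Continuous.intervalIntegrable
    fun_prop

lemma alpha_hasDeriv (s G θ : ℝ) (hG : G ≠ 0) (hθ : θ ≠ 0) :
    HasDerivAt (alphaFun s G)
      (((s * exp (-(θ*s)) * (1 - exp (-(G*θ))) + (1 - exp (-(θ*s))) * (G * exp (-(G*θ)))) * (G*θ)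
        - (1 - exp (-(θ*s))) * (1 - exp (-(G*θ))) * G) / (G*θ)^2) θ := by
  have h1 : HasDerivAt (fun θ : ℝ => 1 - exp (-(θ*s))) (s * exp (-(θ*s))) θ := by
    have := ((((hasDerivAt_id θ).mul_const s).neg).exp).const_sub 1
    refine this.congr_deriv ?_
    simp
    try ring
  have h2 : HasDerivAt (fun θ : ℝ => 1 - exp (-(G*θ))) (G * exp (-(G*θ))) θ := by
    have := ((((hasDerivAt_id θ).const_mul G).neg).exp).const_sub 1
    refine this.congr_deriv ?_
    simp
    try ring
  have h3 : HasDerivAt (fun θ : ℝ => G * θ) G θ := by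
    simpa using (hasDerivAt_id θ).const_mul G
  have h := (h1.mul h2).div h3 (mul_ne_zero hG hθ)
  refine h.congr_deriv ?_
  simp only [Pi.mul_apply]
  try ring

lemma exponentialPDFReal_eq' (r x : ℝ) :
    exponentialPDFReal r x = if 0 ≤ x then r * exp (-(r * x)) else 0 := by
  rw [exponentialPDFReal, gammaPDFReal]
  simp only [rpow_one, Real.Gamma_one, div_one, sub_self, rpow_zero, mul_one]

lemma expMeasure_eq (r : ℝ) :
    expMeasure r = volume.withDensity (fun x => ((exponentialPDFReal r x).toNNReal : ℝ≥0∞)) := rfl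

lemma exp_setIntegral (θ c t s : ℝ) (hθ : 0 < θ) (ht : 0 ≤ t) :
    ∫ x in Icc t (t+s), (x + c) ∂(expMeasure θ)
      = ∫ x in Icc t (t+s), θ * exp (-(θ*x)) * (x + c) := by
  rw [expMeasure_eq, restrict_withDensity measurableSet_Icc,
    integral_withDensity_eq_integral_smul ((measurable_exponentialPDFReal θ).real_toNNReal)]
  apply setIntegral_congr_fun measurableSet_Icc
  intro x hx
  have hx0 : 0 ≤ x := le_trans ht hx.1
  simp only []
  rw [exponentialPDFReal_eq', if_pos hx0, NNReal.smul_def,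
    Real.coe_toNNReal _ (by positivity), smul_eq_mul]

/-- The score has mean zero at the true parameter:
`E[1_{T̃ ≤ X̃ ≤ T̃ + s}·(X̃ − 1/θ₀ + α'(θ₀)/α(θ₀))] = 0`. -/
theorem score_mean_zero
    {Ω : Type*} [MeasurableSpace Ω] (P : Measure Ω) [IsProbabilityMeasure P]
    (θ₀ s G : ℝ) (hθ₀ : 0 < θ₀) (hs : 0 < s) (hG : 0 < G)
    (X T : Ω → ℝ) (hX : Measurable X) (hT : Measurable T)
    (hXlaw : P.map X = expMeasure θ₀)
    (hTlaw : P.map T = uniformMeasure G)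
    (hindep : IndepFun X T P) :
    ∫ ω in {ω | T ω ≤ X ω ∧ X ω ≤ T ω + s},
        (X ω - 1 / θ₀ + deriv (alphaFun s G) θ₀ / alphaFun s G θ₀) ∂P = 0 := by
  haveI hPexp : IsProbabilityMeasure (expMeasure θ₀) := isProbabilityMeasure_expMeasure hθ₀
  haveI hPuni : IsProbabilityMeasure (uniformMeasure G) := by
    constructor
    rw [uniformMeasure, Measure.smul_apply, Measure.restrict_apply_univ, Real.volume_Icc,
      sub_zero, smul_eq_mul]
    exact ENNReal.inv_mul_cancel (by simp [hG]) ENNReal.ofReal_ne_top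
  set q : ℝ := deriv (alphaFun s G) θ₀ / alphaFun s G θ₀ with hq
  set c : ℝ := -(1/θ₀) + q with hc
  have hint : ∀ ω, X ω - 1/θ₀ + q = X ω + c := fun ω => by rw [hc]; ring
  simp_rw [hint]
  -- the joint law
  have hmap : P.map (fun ω => (T ω, X ω)) = (uniformMeasure G).prod (expMeasure θ₀) := by
    rw [← hTlaw, ← hXlaw]
    exact (indepFun_iff_map_prod_eq_prod_map_map hT.aemeasurable hX.aemeasurable).mp hindep.symm
  set S : Set (ℝ × ℝ) := {p | p.1 ≤ p.2 ∧ p.2 ≤ p.1 + s} with hSdef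
  have hSm : MeasurableSet S :=
    (measurableSet_le measurable_fst measurable_snd).inter
      (measurableSet_le measurable_snd (measurable_fst.add_const s))
  have hstep1 : ∫ ω in {ω | T ω ≤ X ω ∧ X ω ≤ T ω + s}, (X ω + c) ∂P
      = ∫ p in S, (p.2 + c) ∂((uniformMeasure G).prod (expMeasure θ₀)) := by
    rw [← hmap, setIntegral_map (f := fun p : ℝ × ℝ => p.2 + c) hSm (continuous_snd.add continuous_const).aestronglyMeasurable (hT.prodMk hX).aemeasurable]
    rfl
  rw [hstep1]
  -- integrability
  have hfin : IntegrableOn (fun p : ℝ×ℝ => p.2 + c) S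
      ((uniformMeasure G).prod (expMeasure θ₀)) := by
    apply Measure.integrableOn_of_bounded (M := G + s + |c|) (measure_ne_top _ _) (continuous_snd.add continuous_const).aestronglyMeasurable
    have h1 : ∀ᵐ p : ℝ×ℝ ∂((uniformMeasure G).prod (expMeasure θ₀)), p.1 ∈ Icc 0 G := by
      rw [ae_iff]
      have he : {p : ℝ×ℝ | ¬ p.1 ∈ Icc 0 G} = (Icc 0 G)ᶜ ×ˢ univ := by ext p; simp
      rw [he, Measure.prod_prod]
      have h0 : uniformMeasure G (Icc 0 G)ᶜ = 0 := by
        rw [uniformMeasure, Measure.smul_apply,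
          Measure.restrict_apply measurableSet_Icc.compl]
        simp
      simp [h0]
    filter_upwards [ae_restrict_of_ae h1, ae_restrict_mem hSm] with p hp1 hp2
    have h3 : p.2 ≤ G + s := le_trans hp2.2 (by linarith [hp1.2])
    have h4 : 0 ≤ p.2 := le_trans hp1.1 hp2.1
    rw [Real.norm_eq_abs]
    calc |p.2 + c| ≤ |p.2| + |c| := abs_add_le _ _
      _ ≤ G + s + |c| := by
          have : |p.2| ≤ G + s := abs_le.mpr ⟨by linarith, h3⟩
          linarith
  rw [← integral_indicator hSm,
    integral_prod _ (hfin.integrable_indicator hSm)]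
  -- inner integral
  have hSind : ∀ t : ℝ, (fun x => S.indicator (fun p : ℝ×ℝ => p.2 + c) (t, x))
      = (Icc t (t+s)).indicator (fun x => x + c) := by
    intro t; funext x
    by_cases h : x ∈ Icc t (t+s)
    · rw [indicator_of_mem h, indicator_of_mem (show (t,x) ∈ S from ⟨h.1, h.2⟩)]
    · rw [indicator_of_notMem h, indicator_of_notMem (fun hx => h ⟨hx.1, hx.2⟩)]
  have hinner : ∀ t : ℝ, ∫ x, S.indicator (fun p : ℝ×ℝ => p.2 + c) (t, x) ∂(expMeasure θ₀)
      = ∫ x in Icc t (t+s), (x + c) ∂(expMeasure θ₀) := by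
    intro t
    rw [hSind t, integral_indicator measurableSet_Icc]
  simp_rw [hinner]
  -- outer integral
  rw [uniformMeasure, integral_smul_measure]
  have houter : ∫ t in Icc 0 G, (∫ x in Icc t (t+s), (x + c) ∂(expMeasure θ₀)) ∂volume = 0 := by
    have hcong : ∀ t ∈ Icc (0:ℝ) G,
        (∫ x in Icc t (t+s), (x + c) ∂(expMeasure θ₀))
        = (t + (c + 1/θ₀)) * exp (-(θ₀*t)) - ((t+s) + (c + 1/θ₀)) * exp (-(θ₀*(t+s))) := by
      intro t ht
      rw [exp_setIntegral θ₀ c t s hθ₀ ht.1, integral_Icc_eq_integral_Ioc,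
        ← intervalIntegral.integral_of_le (by linarith [hs.le] : t ≤ t + s),
        integral_exp_affine θ₀ c t (t+s) hθ₀.ne']
    rw [setIntegral_congr_fun measurableSet_Icc hcong, integral_Icc_eq_integral_Ioc,
      ← intervalIntegral.integral_of_le hG.le, integral_outer θ₀ (c + 1/θ₀) s G hθ₀.ne']
    -- final algebra
    have hca : c + 1/θ₀ = deriv (alphaFun s G) θ₀ / alphaFun s G θ₀ := by rw [hc]; ring
    rw [hca, (alpha_hasDeriv s G θ₀ hG.ne' hθ₀.ne').deriv]
    have hu1 : exp (-(θ₀*s)) < 1 := exp_lt_one_iff.mpr (by nlinarith)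
    have hv1 : exp (-(G*θ₀)) < 1 := exp_lt_one_iff.mpr (by nlinarith)
    have h1 : (1:ℝ) - exp (-(θ₀*s)) ≠ 0 := by linarith
    have h2 : (1:ℝ) - exp (-(G*θ₀)) ≠ 0 := by linarith
    have hGθ : G * θ₀ ≠ 0 := by positivity
    rw [show -(θ₀*G) = -(G*θ₀) by ring]
    simp only [alphaFun, mul_zero, neg_zero, exp_zero]
    generalize exp (-(θ₀*s)) = u at *
    generalize exp (-(G*θ₀)) = v at *
    field_simp
    ring
  rw [houter]
  simp
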